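/- For coprime integers 0 < q < m, if [e_1,...,e_r] is the Hirzebruch–Jung continued fraction expansion of m/q (so each e_i ≥ 2) and [b_1,...,b_s] is the Hirzebruch–Jung continued fraction expansion of m/(m-q), then the concatenated continued fraction [e_1,...,e_r,1,b_s,...,b_1] evaluates to 0. -/

import Mathlib

/-- The value of a Hirzebruch–Jung continued fraction `[e₁,…,e_r]`,
computed as `e₁ - 1/[e₂,…,e_r]` with `[e_r] = e_r`. -/
def hjVal : List ℤ → ℚ
  | [] => 0
  | [x] => (x : ℚ)
  | x :: y :: xs => (x : ℚ) - (hjVal (y :: xs))⁻¹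

/-- `IsHJ m q L` : `L` is the HJ continued fraction expansion of `m/q`
(all entries at least 2 and value `m/q`). -/
def IsHJ (m q : ℤ) (L : List ℤ) : Prop :=
  (∀ e ∈ L, 2 ≤ e) ∧ hjVal L = (m : ℚ) / (q : ℚ)

/-- `IsWahlChain n a L` : `L` is the Wahl chain of `n²/(na-1)` for coprime `0 < a < n`. -/
def IsWahlChain (n a : ℤ) (L : List ℤ) : Prop :=
  0 < a ∧ a < n ∧ Int.gcd n a = 1 ∧ IsHJ (n ^ 2) (n * a - 1) L

/-! ### Auxiliary development: matrix of a continued fraction -/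

/-- Apply the matrices `[[x,-1],[1,0]]` of the entries of `L` to the vector `v`. -/
def hjv (v : ℤ × ℤ) : List ℤ → ℤ × ℤ
  | [] => v
  | x :: L => (x * (hjv v L).1 - (hjv v L).2, (hjv v L).1)

def hjP (L : List ℤ) : ℤ := (hjv (1, 0) L).1
def hjQ (L : List ℤ) : ℤ := (hjv (1, 0) L).2
def hjP2 (L : List ℤ) : ℤ := (hjv (0, 1) L).1
def hjQ2 (L : List ℤ) : ℤ := (hjv (0, 1) L).2

lemma hjP_nil : hjP ([] : List ℤ) = 1 := rfl
lemma hjQ_nil : hjQ ([] : List ℤ) = 0 := rfl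
lemma hjP2_nil : hjP2 ([] : List ℤ) = 0 := rfl
lemma hjQ2_nil : hjQ2 ([] : List ℤ) = 1 := rfl
lemma hjP_cons (x : ℤ) (L : List ℤ) : hjP (x :: L) = x * hjP L - hjQ L := rfl
lemma hjQ_cons (x : ℤ) (L : List ℤ) : hjQ (x :: L) = hjP L := rfl
lemma hjP2_cons (x : ℤ) (L : List ℤ) : hjP2 (x :: L) = x * hjP2 L - hjQ2 L := rfl
lemma hjQ2_cons (x : ℤ) (L : List ℤ) : hjQ2 (x :: L) = hjP2 L := rfl

lemma hjv_append (v : ℤ × ℤ) (L K : List ℤ) : hjv v (L ++ K) = hjv (hjv v K) L := by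
  induction L with
  | nil => rfl
  | cons x L ih => simp [hjv, ih]

lemma hjv_eval (a b : ℤ) (L : List ℤ) :
    hjv (a, b) L = (a * hjP L + b * hjP2 L, a * hjQ L + b * hjQ2 L) := by
  induction L with
  | nil => simp [hjv, hjP_nil, hjQ_nil, hjP2_nil, hjQ2_nil]
  | cons x L ih =>
    simp only [hjv, ih, hjP_cons, hjQ_cons, hjP2_cons, hjQ2_cons, Prod.mk.injEq]
    exact ⟨by ring, trivial⟩

lemma hjdet (L : List ℤ) : hjP L * hjQ2 L - hjQ L * hjP2 L = 1 := by
  induction L with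
  | nil => simp [hjP_nil, hjQ_nil, hjP2_nil, hjQ2_nil]
  | cons x L ih =>
    simp only [hjP_cons, hjQ_cons, hjP2_cons, hjQ2_cons]
    nlinarith [ih]

lemma hj_bounds (L : List ℤ) (h : ∀ e ∈ L, 2 ≤ e) : 0 ≤ hjQ L ∧ hjQ L < hjP L := by
  induction L with
  | nil => simp [hjP_nil, hjQ_nil]
  | cons x L ih =>
    have hx : 2 ≤ x := h x (by simp)
    have ih' := ih (fun e he => h e (by simp [he]))
    simp only [hjP_cons, hjQ_cons]
    constructor
    · linarith [ih'.1, ih'.2]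
    · nlinarith [ih'.1, ih'.2]

lemma hjP_pos (L : List ℤ) (h : ∀ e ∈ L, 2 ≤ e) : 0 < hjP L :=
  lt_of_le_of_lt (hj_bounds L h).1 (hj_bounds L h).2

lemma hjQ_pos (L : List ℤ) (h : ∀ e ∈ L, 2 ≤ e) (hne : L ≠ []) : 0 < hjQ L := by
  match L with
  | [] => exact absurd rfl hne
  | x :: L =>
    rw [hjQ_cons]
    exact hjP_pos L (fun e he => h e (by simp [he]))

lemma hj_coprime (L : List ℤ) : IsCoprime (hjP L) (hjQ L) := by
  induction L with
  | nil => simp [hjP_nil, hjQ_nil, isCoprime_one_left]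
  | cons x L ih =>
    simp only [hjP_cons, hjQ_cons]
    have h := (ih.neg_right.symm).add_mul_right_left x
    rw [show x * hjP L - hjQ L = -hjQ L + x * hjP L by ring]
    exact h

lemma hj_reverse (L : List ℤ) :
    hjP L.reverse = hjP L ∧ hjQ L.reverse = -hjP2 L ∧
    hjP2 L.reverse = -hjQ L ∧ hjQ2 L.reverse = hjQ2 L := by
  induction L with
  | nil => simp [hjP_nil, hjQ_nil, hjP2_nil, hjQ2_nil]
  | cons x L ih =>
    obtain ⟨h1, h2, h3, h4⟩ := ih
    have hc : hjv ((1 : ℤ), (0 : ℤ)) ((x :: L).reverse) = hjv (x, 1) L.reverse := by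
      rw [List.reverse_cons, hjv_append]
      norm_num [hjv]
    have hd : hjv ((0 : ℤ), (1 : ℤ)) ((x :: L).reverse) = hjv (-1, 0) L.reverse := by
      rw [List.reverse_cons, hjv_append]
      norm_num [hjv]
    refine ⟨?_, ?_, ?_, ?_⟩
    · show (hjv ((1 : ℤ), (0 : ℤ)) ((x :: L).reverse)).1 = _
      rw [hc]
      simp only [hjv_eval, h1, h2, h3, h4, hjP_cons, hjQ_cons, hjP2_cons, hjQ2_cons]
      ring
    · show (hjv ((1 : ℤ), (0 : ℤ)) ((x :: L).reverse)).2 = _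
      rw [hc]
      simp only [hjv_eval, h1, h2, h3, h4, hjP_cons, hjQ_cons, hjP2_cons, hjQ2_cons]
      ring
    · show (hjv ((0 : ℤ), (1 : ℤ)) ((x :: L).reverse)).1 = _
      rw [hd]
      simp only [hjv_eval, h1, h2, h3, h4, hjP_cons, hjQ_cons, hjP2_cons, hjQ2_cons]
      ring
    · show (hjv ((0 : ℤ), (1 : ℤ)) ((x :: L).reverse)).2 = _
      rw [hd]
      simp only [hjv_eval, h1, h2, h3, h4, hjP_cons, hjQ_cons, hjP2_cons, hjQ2_cons]
      ring

lemma hjP_append (L K : List ℤ) :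
    hjP (L ++ K) = hjP K * hjP L + hjQ K * hjP2 L ∧
    hjQ (L ++ K) = hjP K * hjQ L + hjQ K * hjQ2 L := by
  have h : hjv ((1 : ℤ), (0 : ℤ)) (L ++ K) = hjv (hjP K, hjQ K) L := by
    rw [hjv_append]; rfl
  constructor
  · show (hjv ((1 : ℤ), (0 : ℤ)) (L ++ K)).1 = _
    rw [h]; simp only [hjv_eval]
  · show (hjv ((1 : ℤ), (0 : ℤ)) (L ++ K)).2 = _
    rw [h]; simp only [hjv_eval]

/-- One-step monotonicity of `Q/P` under appending an element on the right. -/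
lemma hj_step_mono (T : List ℤ) (x : ℤ) (hT : ∀ e ∈ T ++ [x], 2 ≤ e) :
    (hjQ T : ℚ) / hjP T < (hjQ (T ++ [x]) : ℚ) / hjP (T ++ [x]) := by
  have hPT : 0 < hjP T := hjP_pos T (fun e he => hT e (by simp [he]))
  have hPT' : 0 < hjP (T ++ [x]) := hjP_pos _ hT
  have hap := hjP_append T [x]
  have hdet := hjdet T
  have hPx : hjP [x] = x := by rw [hjP_cons, hjP_nil, hjQ_nil]; ring
  have hQx : hjQ [x] = 1 := by rw [hjQ_cons, hjP_nil]
  rw [div_lt_div_iff₀ (by exact_mod_cast hPT) (by exact_mod_cast hPT')]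
  have key : hjQ T * hjP (T ++ [x]) < hjQ (T ++ [x]) * hjP T := by
    rw [hap.1, hap.2, hPx, hQx]
    nlinarith [hdet]
  exact_mod_cast key

/-- Strict monotonicity of `Q/P` on proper prefixes. -/
lemma hj_prefix_mono (K' D : List ℤ) :
    (∀ e ∈ K' ++ D, 2 ≤ e) → D ≠ [] →
    (hjQ K' : ℚ) / hjP K' < (hjQ (K' ++ D) : ℚ) / hjP (K' ++ D) := by
  induction D using List.reverseRecOn with
  | nil => intro _ hD; exact absurd rfl hD
  | append_singleton D' x ih =>
    intro h _
    have hsub : ∀ e ∈ K' ++ D', 2 ≤ e := fun e he => h e (by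
      simp only [List.mem_append] at he ⊢; tauto)
    have hall : ∀ e ∈ (K' ++ D') ++ [x], 2 ≤ e := fun e he => h e (by
      simp only [List.mem_append] at he ⊢; tauto)
    rcases eq_or_ne D' [] with rfl | hne
    · simpa using hj_step_mono K' x (by simpa using h)
    · have step := hj_step_mono (K' ++ D') x hall
      have ihh := ih hsub hne
      rw [← List.append_assoc]
      exact ihh.trans step

lemma hjVal_eq (L : List ℤ) (h : ∀ S, S <:+ L → S ≠ L → 0 < hjP S) :
    hjVal L = (hjP L : ℚ) / hjQ L := by
  induction L with
  | nil => simp [hjVal, hjP_nil, hjQ_nil]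
  | cons x t ih =>
    cases t with
    | nil => norm_num [hjVal, hjP_cons, hjQ_cons, hjP_nil, hjQ_nil]
    | cons y xs =>
      have hsuf : (y :: xs) <:+ x :: y :: xs := ⟨[x], rfl⟩
      have hlen : ∀ S : List ℤ, S <:+ (y :: xs) → S ≠ x :: y :: xs := by
        intro S hS hEq
        have := hS.length_le
        rw [hEq] at this
        simp at this
      have ih' := ih (fun S hS _ => h S (hS.trans hsuf) (hlen S hS))
      have hPt : 0 < hjP (y :: xs) := h _ hsuf (hlen _ (List.suffix_refl _))
      have hPt' : (hjP (y :: xs) : ℚ) ≠ 0 := by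
        have := hPt.ne'
        exact_mod_cast this
      show (x : ℚ) - (hjVal (y :: xs))⁻¹ = _
      rw [ih', inv_div, hjP_cons x, hjQ_cons x]
      push_cast
      rw [sub_div, mul_div_assoc, div_self hPt', mul_one]

lemma hj_identify (m q : ℤ) (L : List ℤ) (hq : 0 < q) (hm : 0 < m)
    (hcop : IsCoprime m q) (hL : IsHJ m q L) : hjP L = m ∧ hjQ L = q := by
  obtain ⟨h2, hval⟩ := hL
  have hLne : L ≠ [] := by
    rintro rfl
    rw [show hjVal [] = 0 from rfl] at hval
    have hpos : (0 : ℚ) < (m : ℚ) / (q : ℚ) :=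
      div_pos (by exact_mod_cast hm) (by exact_mod_cast hq)
    rw [← hval] at hpos
    exact lt_irrefl _ hpos
  have hsufpos : ∀ S, S <:+ L → S ≠ L → 0 < hjP S := fun S hS _ =>
    hjP_pos S (fun e he => h2 e (hS.subset he))
  have hval' := hjVal_eq L hsufpos
  have hQpos : 0 < hjQ L := hjQ_pos L h2 hLne
  have key : (hjP L : ℚ) / hjQ L = (m : ℚ) / (q : ℚ) := by rw [← hval', hval]
  have hcross : hjP L * q = m * hjQ L := by
    have hq0 : (q : ℚ) ≠ 0 := by exact_mod_cast hq.ne'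
    have hQ0 : ((hjQ L : ℤ) : ℚ) ≠ 0 := by exact_mod_cast hQpos.ne'
    have := (div_eq_div_iff hQ0 hq0).mp key
    exact_mod_cast this
  have hco := hj_coprime L
  have hd1 : hjQ L ∣ q := by
    have hdvd : hjQ L ∣ hjP L * q := ⟨m, by rw [hcross]; ring⟩
    exact hco.symm.dvd_of_dvd_mul_left hdvd
  have hd2 : q ∣ hjQ L := by
    have hdvd : q ∣ m * hjQ L := ⟨hjP L, by rw [← hcross]; ring⟩
    exact hcop.symm.dvd_of_dvd_mul_left hdvd
  have hQq : hjQ L = q := Int.dvd_antisymm hQpos.le hq.le hd1 hd2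
  refine ⟨?_, hQq⟩
  have : hjP L * q = m * q := by rw [hcross, hQq]
  exact mul_right_cancel₀ hq.ne' this

lemma suffix_append_cases {α : Type*} (L T S : List α) (h : S <:+ L ++ T) :
    S <:+ T ∨ ∃ L', L' <:+ L ∧ S = L' ++ T := by
  induction L with
  | nil => exact Or.inl (by simpa using h)
  | cons x L ih =>
    rw [List.cons_append, List.suffix_cons_iff] at h
    rcases h with rfl | h
    · exact Or.inr ⟨x :: L, List.suffix_refl _, rfl⟩
    · rcases ih h with h' | ⟨L', hL', rfl⟩
      · exact Or.inl h'
      · exact Or.inr ⟨L', hL'.trans (List.suffix_cons x L), rfl⟩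

theorem stmt0 (m q : ℤ) (E B : List ℤ)
    (hq : 0 < q) (hqm : q < m) (hcop : Int.gcd m q = 1)
    (hE : IsHJ m q E) (hB : IsHJ m (m - q) B) :
    hjVal (E ++ 1 :: B.reverse) = 0 := by
  have hcop' : IsCoprime m q := Int.isCoprime_iff_gcd_eq_one.mpr hcop
  have hm : 0 < m := hq.trans hqm
  have hcop2 : IsCoprime m (m - q) := by
    have h := (hcop'.neg_right).add_mul_left_right 1
    rw [show m - q = -q + m * 1 by ring]
    exact h
  obtain ⟨hPE, hQE⟩ := hj_identify m q E hq hm hcop' hE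
  obtain ⟨hPB, hQB⟩ := hj_identify m (m - q) B (by linarith) hm hcop2 hB
  obtain ⟨hE2, _⟩ := hE
  obtain ⟨hB2, _⟩ := hB
  have hEne : E ≠ [] := by rintro rfl; rw [hjQ_nil] at hQE; omega
  have hBne : B ≠ [] := by rintro rfl; rw [hjQ_nil] at hQB; omega
  obtain ⟨rE1, rE2, rE3, rE4⟩ := hj_reverse E
  obtain ⟨rB1, rB2, rB3, rB4⟩ := hj_reverse B
  have hrevE2 : ∀ e ∈ E.reverse, 2 ≤ e := fun e he => hE2 e (List.mem_reverse.mp he)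
  have hrevB2 : ∀ e ∈ B.reverse, 2 ≤ e := fun e he => hB2 e (List.mem_reverse.mp he)
  have hrevEne : E.reverse ≠ [] := by simpa using hEne
  have hrevBne : B.reverse ≠ [] := by simpa using hBne
  set a : ℤ := -hjP2 E with ha
  set b : ℤ := -hjP2 B with hb
  have haB : 1 ≤ a ∧ a < m := by
    have h1 := hjQ_pos E.reverse hrevE2 hrevEne
    have h2 := (hj_bounds E.reverse hrevE2).2
    rw [rE2] at h1
    rw [rE1, rE2, hPE] at h2
    omega
  have hbB : 1 ≤ b ∧ b < m := by
    have h1 := hjQ_pos B.reverse hrevB2 hrevBne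
    have h2 := (hj_bounds B.reverse hrevB2).2
    rw [rB2] at h1
    rw [rB1, rB2, hPB] at h2
    omega
  have detE : m * hjQ2 E + q * a = 1 := by
    have h := hjdet E
    rw [hPE, hQE] at h
    rw [ha]
    linear_combination h
  have detB : m * hjQ2 B + (m - q) * b = 1 := by
    have h := hjdet B
    rw [hPB, hQB] at h
    rw [hb]
    linear_combination h
  have hdvd : m ∣ q * (a + b) := ⟨b + hjQ2 B - hjQ2 E, by linear_combination detE - detB⟩
  have hab : a + b = m := by
    obtain ⟨k, hk⟩ := hcop'.dvd_of_dvd_mul_left hdvd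
    have hkpos : 0 < k := by
      by_contra hcon
      push_neg at hcon
      have : m * k ≤ 0 := mul_nonpos_of_nonneg_of_nonpos hm.le hcon
      omega
    have hklt : k < 2 := by
      by_contra hcon
      push_neg at hcon
      have : m * 2 ≤ m * k := mul_le_mul_of_nonneg_left hcon hm.le
      omega
    have : k = 1 := by omega
    rw [this] at hk
    omega
  have h1B : hjP (1 :: B.reverse) = a ∧ hjQ (1 :: B.reverse) = m := by
    rw [hjP_cons, hjQ_cons, rB1, rB2, hPB]
    constructor
    · omega
    · rfl
  have happ := hjP_append E (1 :: B.reverse)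
  have hPfull : hjP (E ++ 1 :: B.reverse) = 0 := by
    rw [happ.1, h1B.1, h1B.2, hPE]
    linear_combination m * ha
  have hsuf : ∀ S, S <:+ (E ++ 1 :: B.reverse) → S ≠ (E ++ 1 :: B.reverse) → 0 < hjP S := by
    intro S hS hne
    rcases suffix_append_cases E (1 :: B.reverse) S hS with hS | ⟨E', hE', rfl⟩
    · rw [List.suffix_cons_iff] at hS
      rcases hS with rfl | hS
      · rw [h1B.1]; omega
      · exact hjP_pos S (fun e he => hrevB2 e (hS.subset he))
    · have hE'ne : E' ≠ E := fun hEE => hne (by rw [hEE])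
      have hPE' : 0 < hjP E' := hjP_pos E' (fun e he => hE2 e (hE'.subset he))
      have happ' := hjP_append E' (1 :: B.reverse)
      rw [happ'.1, h1B.1, h1B.2]
      rcases eq_or_ne E' [] with rfl | hE'nil
      · rw [hjP_nil, hjP2_nil]; omega
      · obtain ⟨D, hD⟩ := hE'
        have hDne : D ≠ [] := by
          rintro rfl
          simp only [List.nil_append] at hD
          exact hE'ne hD
        have hrev : E.reverse = E'.reverse ++ D.reverse := by
          rw [← hD, List.reverse_append]
        have hmono := hj_prefix_mono E'.reverse D.reverse
          (by rw [← hrev]; exact hrevE2) (by simpa using hDne)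
        rw [← hrev] at hmono
        obtain ⟨sE1, sE2, _, _⟩ := hj_reverse E'
        rw [sE1, sE2, rE1, rE2, hPE] at hmono
        rw [div_lt_div_iff₀ (by exact_mod_cast hPE') (by exact_mod_cast hm)] at hmono
        have hmono' : -hjP2 E' * m < a * hjP E' := by exact_mod_cast hmono
        nlinarith [hmono']
  rw [hjVal_eq _ hsuf, hPfull]
  simp
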